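/- Let ξ₁,…,ξ_{d+1} be vectors in ℝ^d such that the origin lies in the interior of their convex hull Π[ξ₁,…,ξ_{d+1}], ordered so that (ξ₂,…,ξ_{d+1}) is a positively oriented basis of ℝ^d, and let f(ξ₁),…,f(ξ_{d+1}) be arbitrary real numbers. Set D = Σ_{i=1}^{d+1} (−1)^{i−1} D({ξ̂ᵢ}), where {ξ̂ᵢ} is the ordered family obtained by removing ξᵢ. Then min_{γ∈ℝ^d} max_{i} [f(ξᵢ) − ⟨ξᵢ,γ⟩] = (1/D) Σ_{i=1}^{d+1} f(ξᵢ)(−1)^{i+1} D({ξ̂ᵢ}), and the minimum is attained at the unique point γ₀ = −(1/D)[f(ξ₁)R̃({ξ̂₁}) − f(ξ₂)R̃({ξ̂₂}) + ⋯ + (−1)^d f(ξ_{d+1})R̃({ξ̂_{d+1}})], which is the unique solution of the linear system ⟨ξᵢ − ξ₁, γ⟩ = f(ξᵢ) − f(ξ₁), i = 2,…,d+1. -/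

import Mathlib

noncomputable section

/-- Standard inner product on ℝ^d. -/
def dotp {d : ℕ} (u v : Fin d → ℝ) : ℝ := ∑ i, u i * v i

/-- Oriented volume `D(u₁,…,u_d)`: determinant of the matrix with rows `u₁,…,u_d`. -/
def mdet {d : ℕ} (u : Fin d → (Fin d → ℝ)) : ℝ := Matrix.det (Matrix.of u)

/-- The rotor `R(v₁,…,v_m)` of `m` vectors in ℝ^{m+1}: the formal determinant whose first
row consists of the standard basis vectors and whose remaining rows are `v₁,…,v_m`. -/
def rotor {m : ℕ} (v : Fin m → (Fin (m + 1) → ℝ)) : Fin (m + 1) → ℝ :=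
  fun j => Matrix.det (Matrix.of (Fin.cons (fun l => if l = j then (1 : ℝ) else 0) v))

/-- `R̃(u₁,…,u_{m+1}) = R(u₂ - u₁, …, u_{m+1} - u₁)`. -/
def tildeR {m : ℕ} (u : Fin (m + 1) → (Fin (m + 1) → ℝ)) : Fin (m + 1) → ℝ :=
  rotor (fun i : Fin m => u i.succ - u 0)

namespace Stmt3Aux

open Matrix Finset

lemma dotp_add_left {m : ℕ} (u v w : Fin m → ℝ) : dotp (u + v) w = dotp u w + dotp v w := by
  simp [dotp, add_mul, Finset.sum_add_distrib]

lemma dotp_sub_left {m : ℕ} (u v w : Fin m → ℝ) : dotp (u - v) w = dotp u w - dotp v w := by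
  simp [dotp, sub_mul, Finset.sum_sub_distrib]

lemma dotp_smul_left {m : ℕ} (c : ℝ) (u w : Fin m → ℝ) : dotp (c • u) w = c * dotp u w := by
  simp [dotp, Finset.mul_sum, mul_assoc]

lemma dotp_smul_right {m : ℕ} (c : ℝ) (u w : Fin m → ℝ) : dotp u (c • w) = c * dotp u w := by
  simp [dotp, Finset.mul_sum]; ring_nf; simp [mul_comm, mul_left_comm]

lemma dotp_sub_right {m : ℕ} (u v w : Fin m → ℝ) : dotp u (v - w) = dotp u v - dotp u w := by
  simp [dotp, mul_sub, Finset.sum_sub_distrib]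

lemma dotp_zero_left {m : ℕ} (w : Fin m → ℝ) : dotp 0 w = 0 := by simp [dotp]

lemma dotp_sum_left {m : ℕ} {ι : Type*} (s : Finset ι) (g : ι → Fin m → ℝ) (w : Fin m → ℝ) :
    dotp (∑ i ∈ s, g i) w = ∑ i ∈ s, dotp (g i) w := by
  classical
  induction s using Finset.induction with
  | empty => simp [dotp]
  | insert _ _ h ih => simp [Finset.sum_insert h, dotp_add_left, ih]

lemma dotp_sum_right {m : ℕ} {ι : Type*} (s : Finset ι) (g : ι → Fin m → ℝ) (w : Fin m → ℝ) :
    dotp w (∑ i ∈ s, g i) = ∑ i ∈ s, dotp w (g i) := by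
  classical
  induction s using Finset.induction with
  | empty => simp [dotp]
  | insert _ _ h ih =>
      simp only [Finset.sum_insert h, ← ih]
      simp [dotp, mul_add, Finset.sum_add_distrib]

lemma dotp_self_nonneg {m : ℕ} (w : Fin m → ℝ) : 0 ≤ dotp w w :=
  Finset.sum_nonneg fun i _ => mul_self_nonneg _

lemma eq_zero_of_dotp_self {m : ℕ} {w : Fin m → ℝ} (h : dotp w w = 0) : w = 0 := by
  funext j
  have := (Finset.sum_eq_zero_iff_of_nonneg (fun i _ => mul_self_nonneg (w i))).mp h j
    (Finset.mem_univ j)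
  simpa [mul_self_eq_zero] using this

-- scratch: det helpers (will append to a.lean)
lemma of_cons_updateRow {m : ℕ} (z u : Fin (m + 1) → ℝ) (v : Fin m → (Fin (m + 1) → ℝ)) :
    (Matrix.of (Fin.cons z v)).updateRow 0 u = Matrix.of (Fin.cons u v) := by
  have : Matrix.updateRow (Matrix.of (Fin.cons z v)) 0 u
      = Matrix.of (Function.update (Fin.cons z v) 0 u) := rfl
  rw [this, Fin.update_cons_zero]

lemma det_cons_add {m : ℕ} (x y : Fin (m + 1) → ℝ) (v : Fin m → (Fin (m + 1) → ℝ)) :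
    Matrix.det (Matrix.of (Fin.cons (x + y) v)) =
      Matrix.det (Matrix.of (Fin.cons x v)) + Matrix.det (Matrix.of (Fin.cons y v)) := by
  rw [← of_cons_updateRow 0 (x + y) v, ← of_cons_updateRow 0 x v, ← of_cons_updateRow 0 y v]
  exact Matrix.det_updateRow_add _ 0 x y

lemma det_cons_smul {m : ℕ} (c : ℝ) (x : Fin (m + 1) → ℝ) (v : Fin m → (Fin (m + 1) → ℝ)) :
    Matrix.det (Matrix.of (Fin.cons (c • x) v)) = c * Matrix.det (Matrix.of (Fin.cons x v)) := by
  rw [← of_cons_updateRow 0 (c • x) v, ← of_cons_updateRow 0 x v]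
  exact Matrix.det_updateRow_smul _ 0 c x

lemma det_cons_sum {m : ℕ} {ι : Type*} (s : Finset ι) (g : ι → Fin (m + 1) → ℝ)
    (v : Fin m → (Fin (m + 1) → ℝ)) :
    Matrix.det (Matrix.of (Fin.cons (∑ i ∈ s, g i) v)) =
      ∑ i ∈ s, Matrix.det (Matrix.of (Fin.cons (g i) v)) := by
  classical
  induction s using Finset.induction with
  | empty =>
      simp only [Finset.sum_empty]
      exact Matrix.det_eq_zero_of_row_eq_zero 0 (fun j => by simp)
  | insert _ _ h ih => rw [Finset.sum_insert h, det_cons_add, ih, Finset.sum_insert h]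

lemma dotp_rotor {m : ℕ} (u : Fin (m + 1) → ℝ) (v : Fin m → (Fin (m + 1) → ℝ)) :
    dotp u (rotor v) = Matrix.det (Matrix.of (Fin.cons u v)) := by
  have hu : u = ∑ j : Fin (m + 1), u j • (fun l => if l = j then (1 : ℝ) else 0) := by
    funext l
    simp [Finset.sum_ite_eq, mul_ite]
  conv_rhs => rw [hu]
  rw [det_cons_sum]
  simp only [det_cons_smul]
  simp [dotp, rotor, smul_eq_mul]

def Sdet {n : ℕ} (q : Fin (n + 2) → (Fin (n + 1) → ℝ)) : ℝ :=
  Matrix.det (Matrix.of fun m : Fin (n + 2) => Fin.cons (1 : ℝ) (q m))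

lemma Sdet_expand {n : ℕ} (q : Fin (n + 2) → (Fin (n + 1) → ℝ)) :
    Sdet q = ∑ i : Fin (n + 2), (-1 : ℝ) ^ (i : ℕ) * mdet (fun k => q (i.succAbove k)) := by
  rw [Sdet, Matrix.det_succ_column_zero]
  refine Finset.sum_congr rfl fun i _ => ?_
  have h1 : (Matrix.of fun m : Fin (n + 2) => Fin.cons (1 : ℝ) (q m)) i 0 = 1 := by
    simp
  have h2 : ((Matrix.of fun m : Fin (n + 2) => Fin.cons (1 : ℝ) (q m)).submatrix
      i.succAbove Fin.succ) = Matrix.of (fun k => q (i.succAbove k)) := by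
    ext k l
    simp [Matrix.submatrix]
  rw [h1, h2, mdet, mul_one]

lemma Sdet_diff {n : ℕ} (q : Fin (n + 2) → (Fin (n + 1) → ℝ)) :
    Sdet q = mdet (fun k : Fin (n + 1) => q k.succ - q 0) := by
  have hrow : Matrix.det (Matrix.of fun m : Fin (n + 2) => Fin.cons (1 : ℝ) (q m)) =
      Matrix.det (Matrix.of (Fin.cons (Fin.cons (1 : ℝ) (q 0))
        (fun k : Fin (n + 1) => Fin.cons (0 : ℝ) (q k.succ - q 0)))) := by
    refine Matrix.det_eq_of_forall_row_eq_smul_add_const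
      (Fin.cases 0 (fun _ => 1)) 0 (by simp) (fun i j => ?_)
    induction i using Fin.cases with
    | zero => simp
    | succ k =>
        induction j using Fin.cases with
        | zero => simp
        | succ l => simp
  rw [Sdet, hrow, Matrix.det_succ_column_zero, Fin.sum_univ_succ]
  have hz : ∀ k : Fin (n + 1),
      (-1 : ℝ) ^ ((k.succ : Fin (n+2)) : ℕ) *
        (Matrix.of (Fin.cons (Fin.cons (1 : ℝ) (q 0))
          (fun k : Fin (n + 1) => Fin.cons (0 : ℝ) (q k.succ - q 0)))) k.succ 0 *
        Matrix.det ((Matrix.of (Fin.cons (Fin.cons (1 : ℝ) (q 0))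
          (fun k : Fin (n + 1) => Fin.cons (0 : ℝ) (q k.succ - q 0)))).submatrix
          k.succ.succAbove Fin.succ) = 0 := by
    intro k; simp
  rw [Finset.sum_congr rfl (fun k _ => hz k), Finset.sum_const_zero, add_zero]
  have hsub : ((Matrix.of (Fin.cons (Fin.cons (1 : ℝ) (q 0))
      (fun k : Fin (n + 1) => Fin.cons (0 : ℝ) (q k.succ - q 0)))).submatrix
      (0 : Fin (n+2)).succAbove Fin.succ) = Matrix.of (fun k : Fin (n + 1) => q k.succ - q 0) := by
    ext k l
    simp [Matrix.submatrix, Fin.succAbove_zero]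
  rw [hsub]
  simp [mdet]

lemma Sdet_perm {n : ℕ} (q : Fin (n + 2) → (Fin (n + 1) → ℝ)) (σ : Equiv.Perm (Fin (n + 2))) :
    Sdet (q ∘ σ) = (Equiv.Perm.sign σ : ℤ) * Sdet q := by
  have : (Matrix.of fun m : Fin (n + 2) => Fin.cons (1 : ℝ) ((q ∘ σ) m)) =
      (Matrix.of fun m : Fin (n + 2) => Fin.cons (1 : ℝ) (q m)).submatrix σ id := rfl
  rw [Sdet, this, Matrix.det_permute, Sdet]

lemma det_cons_base {n : ℕ} (v : Fin (n + 1) → (Fin (n + 1) → ℝ)) :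
    Matrix.det (Matrix.of (Fin.cons (v 0) (fun k : Fin n => v k.succ - v 0))) = mdet v := by
  refine Matrix.det_eq_of_forall_row_eq_smul_add_const
    (Fin.cases 0 (fun _ => -1)) 0 (by simp) (fun i j => ?_)
  induction i using Fin.cases with
  | zero => simp [mdet]
  | succ k => simp [mdet, sub_eq_add_neg]

/-- If the first row is one of the points `v a`, the determinant of
`(v a, v₁ - v₀, …, vₙ - v₀)` equals `det v`. -/
lemma det_cons_mem {n : ℕ} (v : Fin (n + 1) → (Fin (n + 1) → ℝ)) (a : Fin (n + 1)) :
    Matrix.det (Matrix.of (Fin.cons (v a) (fun k : Fin n => v k.succ - v 0))) = mdet v := by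
  induction a using Fin.cases with
  | zero => exact det_cons_base v
  | succ a =>
      have hsplit : v a.succ = (v a.succ - v 0) + v 0 := by ring
      rw [hsplit, det_cons_add]
      have h0 : Matrix.det (Matrix.of (Fin.cons (v a.succ - v 0)
          (fun k : Fin n => v k.succ - v 0))) = 0 := by
        refine Matrix.det_zero_of_row_eq (i := 0) (j := a.succ) (Fin.succ_ne_zero a).symm ?_
        funext j
        simp
      rw [h0, zero_add]
      exact det_cons_base v

lemma key_ne {n : ℕ} (ξ : Fin (n + 2) → (Fin (n + 1) → ℝ)) {i j : Fin (n + 2)} (hij : i ≠ j) :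
    dotp (ξ i) (tildeR (fun k : Fin (n + 1) => ξ (j.succAbove k))) =
      mdet (fun k : Fin (n + 1) => ξ (j.succAbove k)) := by
  obtain ⟨a, ha⟩ := Fin.exists_succAbove_eq hij
  rw [tildeR, dotp_rotor, ← ha]
  exact det_cons_mem (fun k : Fin (n + 1) => ξ (j.succAbove k)) a

lemma key_eq {n : ℕ} (ξ : Fin (n + 2) → (Fin (n + 1) → ℝ)) (i : Fin (n + 2)) :
    dotp (ξ i) (tildeR (fun k : Fin (n + 1) => ξ (i.succAbove k))) =
      mdet (fun k : Fin (n + 1) => ξ (i.succAbove k)) + (-1 : ℝ) ^ ((i : ℕ) + 1) * Sdet ξ := by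
  set w : Fin (n + 1) → (Fin (n + 1) → ℝ) := fun k => ξ (i.succAbove k) with hw
  rw [tildeR, dotp_rotor]
  have hsplit : ξ i = (ξ i - w 0) + w 0 := by ring
  rw [hsplit, det_cons_add, det_cons_mem w 0]
  have h01 : (0 : Fin (n + 2)) ≠ 1 := by simp [Fin.ext_iff]
  set π : Equiv.Perm (Fin (n + 2)) := (Equiv.swap (0 : Fin (n + 2)) 1).trans i.cycleRange.symm
    with hπ
  have hπ0 : π 0 = i.succAbove 0 := by
    have : π 0 = i.cycleRange.symm 1 := by simp [hπ, Equiv.swap_apply_left]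
    rw [this, show (1 : Fin (n + 2)) = (0 : Fin (n + 1)).succ by simp,
      Fin.cycleRange_symm_succ]
  have hπ1 : π 1 = i := by
    have : π 1 = i.cycleRange.symm 0 := by simp [hπ, Equiv.swap_apply_right]
    rw [this, Fin.cycleRange_symm_zero]
  have hπs : ∀ a : Fin n, π a.succ.succ = i.succAbove a.succ := by
    intro a
    have h0 : (a.succ.succ : Fin (n + 2)) ≠ 0 := Fin.succ_ne_zero _
    have h1 : (a.succ.succ : Fin (n + 2)) ≠ 1 := by
      rw [show (1 : Fin (n + 2)) = (0 : Fin (n + 1)).succ by simp]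
      exact fun h => Fin.succ_ne_zero a (Fin.succ_injective _ h)
    have : π a.succ.succ = i.cycleRange.symm a.succ.succ := by
      simp [hπ, Equiv.swap_apply_of_ne_of_ne h0 h1]
    rw [this, Fin.cycleRange_symm_succ]
  have hq : (fun k : Fin (n + 1) => (ξ ∘ π) k.succ - (ξ ∘ π) 0) =
      Fin.cons (ξ i - w 0) (fun k : Fin n => w k.succ - w 0) := by
    funext k
    induction k using Fin.cases with
    | zero =>
        simp only [Function.comp_apply, hπ0, Fin.cons_zero]
        rw [show ((0 : Fin (n + 1)).succ : Fin (n + 2)) = 1 by simp, hπ1, hw]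
    | succ a =>
        simp only [Function.comp_apply, hπ0, Fin.cons_succ, hπs a, hw]
  have hdet : Matrix.det (Matrix.of (Fin.cons (ξ i - w 0)
      (fun k : Fin n => w k.succ - w 0))) = Sdet (ξ ∘ π) := by
    rw [Sdet_diff, mdet, hq]
  have hsign : ((Equiv.Perm.sign π : ℤ) : ℝ) = (-1 : ℝ) ^ ((i : ℕ) + 1) := by
    have h1 : Equiv.Perm.sign π = Equiv.Perm.sign i.cycleRange.symm *
        Equiv.Perm.sign (Equiv.swap (0 : Fin (n + 2)) 1) := by
      rw [hπ]
      rw [show (Equiv.swap (0 : Fin (n + 2)) 1).trans i.cycleRange.symm =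
        i.cycleRange.symm * Equiv.swap (0 : Fin (n + 2)) 1 from rfl]
      exact map_mul _ _ _
    rw [h1, Equiv.Perm.sign_symm, Fin.sign_cycleRange, Equiv.Perm.sign_swap h01]
    push_cast [pow_succ]
    ring
  rw [hdet, Sdet_perm ξ π, hsign]
  ring

lemma rep_mem_hull {N m : ℕ} {ξ : Fin N → (Fin m → ℝ)} {x : Fin m → ℝ}
    (hx : x ∈ convexHull ℝ (Set.range ξ)) :
    ∃ μ : Fin N → ℝ, (∀ i, 0 ≤ μ i) ∧ ∑ i, μ i = 1 ∧ ∑ i, μ i • ξ i = x := by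
  classical
  rw [convexHull_range_eq_exists_affineCombination] at hx
  obtain ⟨s, w, hw0, hw1, hxx⟩ := hx
  refine ⟨fun i => if i ∈ s then w i else 0, fun i => ?_, ?_, ?_⟩
  · by_cases hi : i ∈ s <;> simp [hi, hw0 i]
  · rw [Finset.sum_ite_mem, Finset.univ_inter]; exact hw1
  · rw [← hxx, Finset.affineCombination_eq_linear_combination s ξ w hw1]
    have h2 : ∑ i : Fin N, (if i ∈ s then w i else 0) • ξ i
        = ∑ i ∈ s, (if i ∈ s then w i else 0) • ξ i :=
      (Finset.sum_subset (Finset.subset_univ s) (fun i _ hi => by simp [hi])).symm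
    simp only []
    rw [h2]
    exact Finset.sum_congr rfl fun i hi => by simp [hi]

end Stmt3Aux

open Stmt3Aux Matrix

theorem stmt3 (d : ℕ) (ξ : Fin (d + 2) → (Fin (d + 1) → ℝ))
    (hin : (0 : Fin (d + 1) → ℝ) ∈ interior (convexHull ℝ (Set.range ξ)))
    -- (ξ₂, …, ξ_{d+1}) is a positively oriented basis
    (hor : 0 < mdet (fun j : Fin (d + 1) => ξ j.succ))
    (f : Fin (d + 2) → ℝ) :
    let hat : Fin (d + 2) → Fin (d + 1) → (Fin (d + 1) → ℝ) :=
      fun i j => ξ (i.succAbove j)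
    let D : ℝ := ∑ i : Fin (d + 2), (-1 : ℝ) ^ (i : ℕ) * mdet (hat i)
    let V : ℝ := (1 / D) * ∑ i : Fin (d + 2), (-1 : ℝ) ^ (i : ℕ) * f i * mdet (hat i)
    let γ₀ : Fin (d + 1) → ℝ :=
      (-(1 / D)) • ∑ i : Fin (d + 2), ((-1 : ℝ) ^ (i : ℕ) * f i) • tildeR (hat i)
    let F : (Fin (d + 1) → ℝ) → ℝ := fun γ => ⨆ i, (f i - dotp (ξ i) γ)
    IsLeast (Set.range F) V ∧ F γ₀ = V ∧ (∀ γ, F γ = V → γ = γ₀) ∧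
      (∀ j : Fin (d + 1), dotp (ξ j.succ - ξ 0) γ₀ = f j.succ - f 0) ∧
      (∀ γ, (∀ j : Fin (d + 1), dotp (ξ j.succ - ξ 0) γ = f j.succ - f 0) → γ = γ₀) := by
  intro hat D V γ₀ F
  classical
  have hFdef : F = fun γ => ⨆ i, (f i - dotp (ξ i) γ) := rfl
  have hγdef : γ₀ = (-(1 / D)) • ∑ j : Fin (d + 2), ((-1 : ℝ) ^ (j : ℕ) * f j) • tildeR (hat j) :=
    rfl
  have hVdef : V = (1 / D) * ∑ j : Fin (d + 2), (-1 : ℝ) ^ (j : ℕ) * f j * mdet (hat j) := rfl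
  have hS : Sdet ξ = D := by rw [Sdet_expand]
  have hDdiff : mdet (fun k : Fin (d + 1) => ξ k.succ - ξ 0) = D := (Sdet_diff ξ).symm.trans hS
  obtain ⟨ε, hε, hball⟩ : ∃ ε > 0,
      Metric.ball (0 : Fin (d + 1) → ℝ) ε ⊆ convexHull ℝ (Set.range ξ) :=
    Metric.mem_nhds_iff.mp (mem_interior_iff_mem_nhds.mp hin)
  -- scaling helper
  have hscale : ∀ h : Fin (d + 1) → ℝ, ∀ c : ℝ, |c| ≤ ε / (2 * (‖h‖ + 1)) →
      c • h ∈ Metric.ball (0 : Fin (d + 1) → ℝ) ε := by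
    intro h c hc
    have hpos : (0 : ℝ) < ‖h‖ + 1 := by positivity
    rw [mem_ball_zero_iff, norm_smul, Real.norm_eq_abs]
    have h1 : |c| * ‖h‖ ≤ (ε / (2 * (‖h‖ + 1))) * (‖h‖ + 1) :=
      mul_le_mul hc (by linarith) (norm_nonneg _) (by positivity)
    have h2 : (ε / (2 * (‖h‖ + 1))) * (‖h‖ + 1) = ε / 2 := by field_simp
    nlinarith [abs_nonneg c, norm_nonneg h]
  -- D ≠ 0
  have hD0 : D ≠ 0 := by
    intro h0
    have hdet0 : (Matrix.of fun k : Fin (d + 1) => ξ k.succ - ξ 0).det = 0 := by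
      rw [show (Matrix.of fun k : Fin (d + 1) => ξ k.succ - ξ 0).det
          = mdet fun k : Fin (d + 1) => ξ k.succ - ξ 0 from rfl, hDdiff]
      exact h0
    obtain ⟨wv, hwv0, hwvz⟩ := Matrix.exists_mulVec_eq_zero_iff.mpr hdet0
    have hdk : ∀ k : Fin (d + 1), dotp (ξ k.succ) wv = dotp (ξ 0) wv := by
      intro k
      have h1 : dotp (ξ k.succ - ξ 0) wv = 0 := congrFun hwvz k
      rw [dotp_sub_left] at h1
      linarith
    have hplane : ∀ x ∈ convexHull ℝ (Set.range ξ), dotp x wv = dotp (ξ 0) wv := by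
      intro x hx
      have hconv : Convex ℝ {y : Fin (d + 1) → ℝ | dotp y wv = dotp (ξ 0) wv} := by
        intro p hp q hq a b ha hb hab
        simp only [Set.mem_setOf_eq] at hp hq ⊢
        rw [dotp_add_left, dotp_smul_left, dotp_smul_left, hp, hq]
        linear_combination dotp (ξ 0) wv * hab
      have hsub : Set.range ξ ⊆ {y | dotp y wv = dotp (ξ 0) wv} := by
        rintro _ ⟨m, rfl⟩
        induction m using Fin.cases with
        | zero => exact rfl
        | succ k => exact hdk k
      exact convexHull_min hsub hconv hx
    have hc0 : dotp (ξ 0) wv = 0 := by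
      have h0m := hplane 0 (hball (Metric.mem_ball_self hε))
      rw [dotp_zero_left] at h0m
      exact h0m.symm
    set t : ℝ := ε / (2 * (‖wv‖ + 1)) with ht_def
    have ht : 0 < t := by positivity
    have hmem := hscale wv t (le_of_eq (abs_of_pos ht))
    have h2 := hplane (t • wv) (hball hmem)
    rw [dotp_smul_left, hc0] at h2
    have hww : dotp wv wv = 0 := by
      rcases mul_eq_zero.mp h2 with h | h
      · exact absurd h (ne_of_gt ht)
      · exact h
    exact hwv0 (eq_zero_of_dotp_self hww)
  -- the key computation
  have key1 : ∀ i : Fin (d + 2), dotp (ξ i) γ₀ = f i - V := by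
    intro i
    have hTne : ∀ k : Fin (d + 1),
        dotp (ξ i) (tildeR (hat (i.succAbove k))) = mdet (hat (i.succAbove k)) := by
      intro k
      exact key_ne ξ (Fin.succAbove_ne i k).symm
    have hTeq : dotp (ξ i) (tildeR (hat i)) = mdet (hat i) + (-1 : ℝ) ^ ((i : ℕ) + 1) * D := by
      have h := key_eq ξ i
      rw [hS] at h
      exact h
    rw [hγdef, dotp_smul_right, dotp_sum_right]
    simp only [dotp_smul_right]
    rw [Fin.sum_univ_succAbove
      (fun j : Fin (d + 2) => ((-1 : ℝ) ^ (j : ℕ) * f j) * dotp (ξ i) (tildeR (hat j))) i]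
    rw [hTeq, Finset.sum_congr rfl (fun k _ => by rw [hTne k])]
    have hpow : (-1 : ℝ) ^ ((i : ℕ)) * (-1 : ℝ) ^ ((i : ℕ) + 1) = -1 := by
      rw [← pow_add]
      exact Odd.neg_one_pow ⟨(i : ℕ), by ring⟩
    have hrec := (Fin.sum_univ_succAbove
      (fun j : Fin (d + 2) => ((-1 : ℝ) ^ (j : ℕ) * f j) * mdet (hat j)) i).symm
    have hVD : ∑ j : Fin (d + 2), ((-1 : ℝ) ^ (j : ℕ) * f j) * mdet (hat j) = D * V := by
      rw [hVdef]
      field_simp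
    have hsum_eq : ((-1 : ℝ) ^ (i : ℕ) * f i) * mdet (hat i) +
        ∑ k : Fin (d + 1), ((-1 : ℝ) ^ ((i.succAbove k : Fin (d + 2)) : ℕ) * f (i.succAbove k)) *
          mdet (hat (i.succAbove k)) = D * V := hrec.trans hVD
    have hN : ((-1 : ℝ) ^ (i : ℕ) * f i) * (mdet (hat i) + (-1 : ℝ) ^ ((i : ℕ) + 1) * D) +
        ∑ k : Fin (d + 1), ((-1 : ℝ) ^ ((i.succAbove k : Fin (d + 2)) : ℕ) * f (i.succAbove k)) *
          mdet (hat (i.succAbove k)) = D * V - f i * D := by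
      linear_combination hsum_eq + (f i * D) * hpow
    rw [hN]
    field_simp
    ring
  -- representation of points of the hull
  have rep : ∀ x ∈ convexHull ℝ (Set.range ξ), ∃ μ : Fin (d + 2) → ℝ,
      (∀ i, 0 ≤ μ i) ∧ ∑ i, μ i = 1 ∧ ∑ i, μ i • ξ i = x := fun x hx => rep_mem_hull hx
  have hbdd : ∀ γ : Fin (d + 1) → ℝ,
      BddAbove (Set.range fun i : Fin (d + 2) => f i - dotp (ξ i) γ) :=
    fun γ => Set.Finite.bddAbove (Set.finite_range _)
  -- F γ₀ = V
  have hFγ₀ : F γ₀ = V := by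
    rw [hFdef]
    have hconst : (fun i : Fin (d + 2) => f i - dotp (ξ i) γ₀) = fun _ => V := by
      funext i
      rw [key1 i]
      ring
    show (⨆ i, (f i - dotp (ξ i) γ₀)) = V
    rw [hconst, ciSup_const]
  -- lower bound
  have hlow : ∀ γ : Fin (d + 1) → ℝ, V ≤ F γ := by
    intro γ
    obtain ⟨μ, hμ0, hμ1, hμx⟩ := rep 0 (interior_subset hin)
    have hfi : ∀ i, f i = V + dotp (ξ i) γ₀ := fun i => by rw [key1 i]; ring
    have hV : ∑ i : Fin (d + 2), μ i * f i = V := by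
      calc ∑ i : Fin (d + 2), μ i * f i
          = ∑ i : Fin (d + 2), (μ i * V + dotp (μ i • ξ i) γ₀) := by
            refine Finset.sum_congr rfl fun i _ => ?_
            rw [hfi i, dotp_smul_left]
            ring
        _ = (∑ i : Fin (d + 2), μ i) * V + dotp (∑ i : Fin (d + 2), μ i • ξ i) γ₀ := by
            rw [Finset.sum_add_distrib, ← Finset.sum_mul, dotp_sum_left]
        _ = V := by rw [hμ1, hμx, dotp_zero_left]; ring
    have hls : ∑ i : Fin (d + 2), μ i * (f i - dotp (ξ i) γ) = V := by
      calc ∑ i : Fin (d + 2), μ i * (f i - dotp (ξ i) γ)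
          = ∑ i : Fin (d + 2), (μ i * f i - dotp (μ i • ξ i) γ) := by
            refine Finset.sum_congr rfl fun i _ => ?_
            rw [dotp_smul_left]
            ring
        _ = ∑ i : Fin (d + 2), μ i * f i - dotp (∑ i : Fin (d + 2), μ i • ξ i) γ := by
            rw [Finset.sum_sub_distrib, dotp_sum_left]
        _ = V := by rw [hV, hμx, dotp_zero_left]; ring
    have hterm : ∀ i : Fin (d + 2), μ i * (f i - dotp (ξ i) γ) ≤ μ i * F γ := by
      intro i
      refine mul_le_mul_of_nonneg_left ?_ (hμ0 i)
      rw [hFdef]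
      exact le_ciSup (hbdd γ) i
    have hsum := Finset.sum_le_sum (fun i (_ : i ∈ Finset.univ) => hterm i)
    rw [hls, ← Finset.sum_mul, hμ1, one_mul] at hsum
    exact hsum
  -- uniqueness of the minimizer
  have huniq : ∀ γ : Fin (d + 1) → ℝ, F γ = V → γ = γ₀ := by
    intro γ hγ
    have hle : ∀ i : Fin (d + 2), f i - dotp (ξ i) γ ≤ V := by
      intro i
      exact (le_ciSup (hbdd γ) i).trans_eq hγ
    have hnn : ∀ i : Fin (d + 2), 0 ≤ dotp (ξ i) (γ - γ₀) := by
      intro i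
      rw [dotp_sub_right]
      have h1 := hle i
      have h2 := key1 i
      linarith
    by_contra hne
    have hh : γ - γ₀ ≠ 0 := sub_ne_zero.mpr hne
    have hpos : 0 < dotp (γ - γ₀) (γ - γ₀) :=
      lt_of_le_of_ne (dotp_self_nonneg _) (fun h => hh (eq_zero_of_dotp_self h.symm))
    set h : Fin (d + 1) → ℝ := γ - γ₀ with hhdef
    set t : ℝ := ε / (2 * (‖h‖ + 1)) with ht_def
    have ht : 0 < t := by positivity
    have habs : |(-t)| ≤ t := by rw [abs_neg, abs_of_pos ht]
    have hmem := hscale h (-t) habs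
    obtain ⟨μ, hμ0, hμ1, hμx⟩ := rep ((-t) • h) (hball hmem)
    have hge : 0 ≤ dotp ((-t) • h) h := by
      rw [← hμx, dotp_sum_left]
      refine Finset.sum_nonneg fun i _ => ?_
      rw [dotp_smul_left]
      exact mul_nonneg (hμ0 i) (hnn i)
    rw [dotp_smul_left] at hge
    nlinarith
  -- the linear system
  have hsys : ∀ j : Fin (d + 1), dotp (ξ j.succ - ξ 0) γ₀ = f j.succ - f 0 := by
    intro j
    rw [dotp_sub_left, key1 j.succ, key1 0]
    ring
  have hsys_uniq : ∀ γ : Fin (d + 1) → ℝ,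
      (∀ j : Fin (d + 1), dotp (ξ j.succ - ξ 0) γ = f j.succ - f 0) → γ = γ₀ := by
    intro γ hγ
    by_contra hne
    have hh : γ - γ₀ ≠ 0 := sub_ne_zero.mpr hne
    have hz : (Matrix.of fun k : Fin (d + 1) => ξ k.succ - ξ 0) *ᵥ (γ - γ₀) = 0 := by
      funext k
      have h1 : ((Matrix.of fun k : Fin (d + 1) => ξ k.succ - ξ 0) *ᵥ (γ - γ₀)) k
          = dotp (ξ k.succ - ξ 0) (γ - γ₀) := rfl
      rw [h1, dotp_sub_right, hγ k, hsys k]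
      simp
    have hdet0 : (Matrix.of fun k : Fin (d + 1) => ξ k.succ - ξ 0).det = 0 :=
      Matrix.exists_mulVec_eq_zero_iff.mp ⟨γ - γ₀, hh, hz⟩
    exact hD0 (by rw [← hDdiff]; exact hdet0)
  refine ⟨⟨⟨γ₀, hFγ₀⟩, ?_⟩, hFγ₀, huniq, hsys, hsys_uniq⟩
  rintro y ⟨γ, rfl⟩
  exact hlow γ
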